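/- For every integer n ≥ 2, Σ_{k=1}^{n} csc(π(2k-1)/(2n)) < 3·Σ_{k=1}^{n-1} csc(πk/n). -/

import Mathlib

open Real Finset

/-- Midpoint convexity of `csc` on `(0, π)`. -/
lemma csc_midpoint {x y : ℝ} (hx0 : 0 < x) (hxp : x < π) (hy0 : 0 < y) (hyp : y < π) :
    1 / Real.sin ((x + y) / 2) ≤ (1 / Real.sin x + 1 / Real.sin y) / 2 := by
  set m := (x + y) / 2 with hm
  set d := (x - y) / 2 with hd
  have hxmd : x = m + d := by rw [hm, hd]; ring
  have hymd : y = m - d := by rw [hm, hd]; ring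
  have hm0 : 0 < m := by rw [hm]; linarith
  have hmp : m < π := by rw [hm]; linarith
  have hsm : 0 < Real.sin m := Real.sin_pos_of_pos_of_lt_pi hm0 hmp
  have hcd : 0 < Real.cos d := by
    apply Real.cos_pos_of_mem_Ioo
    constructor <;> [skip; skip] <;> rw [hd] <;> linarith
  have hsx : 0 < Real.sin x := Real.sin_pos_of_pos_of_lt_pi hx0 hxp
  have hsy : 0 < Real.sin y := Real.sin_pos_of_pos_of_lt_pi hy0 hyp
  have hsinx : Real.sin x = Real.sin m * Real.cos d + Real.cos m * Real.sin d := by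
    rw [hxmd, Real.sin_add]
  have hsiny : Real.sin y = Real.sin m * Real.cos d - Real.cos m * Real.sin d := by
    rw [hymd, Real.sin_sub]
  have hsm1 : Real.sin m ≤ 1 := Real.sin_le_one m
  have hcd1 : Real.cos d ≤ 1 := Real.cos_le_one d
  have pm := Real.sin_sq_add_cos_sq m
  have pd := Real.sin_sq_add_cos_sq d
  have key : 2 * Real.sin x * Real.sin y ≤ Real.sin m * (Real.sin x + Real.sin y) := by
    nlinarith [mul_nonneg (sub_nonneg.2 hcd1) (by nlinarith : (0:ℝ) ≤ 1 + Real.cos d - Real.sin m ^ 2),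
      sq_nonneg (Real.sin d), sq_nonneg (Real.cos m)]
  rw [div_add_div _ _ (ne_of_gt hsx) (ne_of_gt hsy), div_div, div_le_div_iff₀ hsm (by positivity)]
  nlinarith [key]

theorem sum_a_lt_three_S (n : ℕ) (hn : 2 ≤ n) :
    (∑ k ∈ Finset.Icc 1 n, 1 / Real.sin (π * (2 * k - 1) / (2 * n))) <
      3 * ∑ k ∈ Finset.Icc 1 (n - 1), 1 / Real.sin (π * k / n) := by
  rcases eq_or_lt_of_le hn with h2 | h3
  · -- case n = 2
    subst h2
    have e1 : (Icc 1 2 : Finset ℕ) = {1, 2} := rfl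
    have e2 : (Icc 1 1 : Finset ℕ) = {1} := rfl
    rw [show (2 : ℕ) - 1 = 1 from rfl, e1, e2, Finset.sum_pair (by norm_num), Finset.sum_singleton]
    have c1 : π * (2 * ((1:ℕ):ℝ) - 1) / (2 * ((2:ℕ):ℝ)) = π / 4 := by push_cast; ring
    have c2 : π * (2 * ((2:ℕ):ℝ) - 1) / (2 * ((2:ℕ):ℝ)) = π - π / 4 := by push_cast; ring
    have c3 : π * ((1:ℕ):ℝ) / ((2:ℕ):ℝ) = π / 2 := by push_cast; ring
    rw [c1, c2, c3, Real.sin_pi_sub, Real.sin_pi_div_four, Real.sin_pi_div_two]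
    have h2 : Real.sqrt 2 ^ 2 = 2 := Real.sq_sqrt (by norm_num)
    have h2' : (0:ℝ) < Real.sqrt 2 := Real.sqrt_pos.2 (by norm_num)
    rw [← add_div, div_lt_iff₀ (by positivity)]
    nlinarith [h2, h2', sq_nonneg (3 * Real.sqrt 2 - 4)]
  · -- case n ≥ 3
    have hn3 : 3 ≤ n := h3
    have hnR : (0:ℝ) < n := by positivity
    have hπ : (0:ℝ) < π := Real.pi_pos
    -- nonnegativity / positivity of the s-terms
    have hgpos : ∀ k ∈ Icc 1 (n-1), 0 < 1 / Real.sin (π * k / n) := by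
      intro k hk
      rw [Finset.mem_Icc] at hk
      have hk1 : (1:ℝ) ≤ k := by exact_mod_cast hk.1
      have hkn : (k:ℝ) < n := by
        have : k < n := by omega
        exact_mod_cast this
      have : 0 < Real.sin (π * k / n) := by
        apply Real.sin_pos_of_pos_of_lt_pi
        · positivity
        · rw [div_lt_iff₀ hnR]
          nlinarith
      positivity
    set S := ∑ k ∈ Icc 1 (n-1), 1 / Real.sin (π * k / n) with hS
    -- decompose the a-sum
    have hA : (∑ k ∈ Icc 1 n, 1 / Real.sin (π * (2 * k - 1) / (2 * n)))
        = 1 / Real.sin (π * (2 * ((1:ℕ):ℝ) - 1) / (2 * n))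
          + (∑ k ∈ Icc 2 (n-1), 1 / Real.sin (π * (2 * k - 1) / (2 * n)))
          + 1 / Real.sin (π * (2 * (n:ℝ) - 1) / (2 * n)) := by
      have e1 : Icc 1 n = insert 1 (insert n (Icc 2 (n-1))) := by
        ext x; simp only [Finset.mem_Icc, Finset.mem_insert]; omega
      rw [e1, Finset.sum_insert (by simp only [Finset.mem_Icc, Finset.mem_insert]; omega),
        Finset.sum_insert (by simp only [Finset.mem_Icc]; omega)]
      push_cast
      ring
    -- middle terms
    have hmid : ∀ k ∈ Icc 2 (n-1), 1 / Real.sin (π * (2 * k - 1) / (2 * n))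
        ≤ (1 / Real.sin (π * ((k-1 : ℕ):ℝ) / n) + 1 / Real.sin (π * k / n)) / 2 := by
      intro k hk
      rw [Finset.mem_Icc] at hk
      have hc : ((k-1 : ℕ):ℝ) = (k:ℝ) - 1 := by
        have : (1:ℕ) ≤ k := by omega
        push_cast [this]; ring
      have hk2 : (2:ℝ) ≤ k := by exact_mod_cast hk.1
      have hkn : (k:ℝ) ≤ n - 1 := by
        have : k ≤ n - 1 := hk.2
        have h' : (k:ℝ) ≤ ((n-1:ℕ):ℝ) := by exact_mod_cast this
        rwa [Nat.cast_sub (by omega), Nat.cast_one] at h'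
      have hmidpt : π * (2 * (k:ℝ) - 1) / (2 * n) = (π * ((k:ℝ)-1) / n + π * k / n) / 2 := by
        field_simp; ring
      rw [hc, hmidpt]
      apply csc_midpoint
      · have : (0:ℝ) < (k:ℝ) - 1 := by linarith
        positivity
      · rw [div_lt_iff₀ hnR]; nlinarith
      · positivity
      · rw [div_lt_iff₀ hnR]; nlinarith
    have hmidsum : (∑ k ∈ Icc 2 (n-1), 1 / Real.sin (π * (2 * k - 1) / (2 * n))) ≤ S := by
      calc (∑ k ∈ Icc 2 (n-1), 1 / Real.sin (π * (2 * k - 1) / (2 * n)))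
          ≤ ∑ k ∈ Icc 2 (n-1), (1 / Real.sin (π * ((k-1 : ℕ):ℝ) / n) + 1 / Real.sin (π * k / n)) / 2 :=
            Finset.sum_le_sum hmid
        _ = ((∑ k ∈ Icc 2 (n-1), 1 / Real.sin (π * ((k-1 : ℕ):ℝ) / n))
              + ∑ k ∈ Icc 2 (n-1), 1 / Real.sin (π * k / n)) / 2 := by
            rw [← Finset.sum_add_distrib, ← Finset.sum_div]
        _ ≤ (S + S) / 2 := by
            gcongr
            · -- shifted sum
              have himg : (Icc 2 (n-1) : Finset ℕ) = (Icc 1 (n-2)).image (· + 1) := by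
                ext x
                simp only [Finset.mem_Icc, Finset.mem_image]
                constructor
                · intro h; exact ⟨x - 1, by omega, by omega⟩
                · rintro ⟨a, ha, rfl⟩; omega
              rw [himg, Finset.sum_image (by intro a _ b _ h; simp only at h; omega)]
              simp only [Nat.add_sub_cancel]
              apply Finset.sum_le_sum_of_subset_of_nonneg
              · intro x hx; rw [Finset.mem_Icc] at *; omega
              · intro i hi _; exact (hgpos i hi).le
            · apply Finset.sum_le_sum_of_subset_of_nonneg
              · exact Finset.Icc_subset_Icc (by omega) le_rfl
              · intro i hi _; exact (hgpos i hi).le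
        _ = S := by ring
    -- end terms
    have hhalf0 : 0 < π / (2 * n) := by positivity
    have hhalfpi : π / (2 * n) < π / 2 := by
      have hn3R : (3:ℝ) ≤ n := by exact_mod_cast hn3
      rw [div_lt_div_iff₀ (by positivity) (by norm_num)]
      nlinarith [hπ, hn3R]
    have hs2 : 0 < Real.sin (π / (2 * n)) :=
      Real.sin_pos_of_pos_of_lt_pi hhalf0 (by linarith)
    have hc2 : 0 < Real.cos (π / (2 * n)) :=
      Real.cos_pos_of_mem_Ioo ⟨by linarith, hhalfpi⟩
    have hc2' : Real.cos (π / (2 * n)) < 1 := by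
      nlinarith [Real.sin_sq_add_cos_sq (π / (2 * n))]
    have hdouble : Real.sin (π * ((1:ℕ):ℝ) / n) = 2 * Real.sin (π / (2 * n)) * Real.cos (π / (2 * n)) := by
      rw [← Real.sin_two_mul]
      congr 1
      push_cast
      field_simp
    have hend : 1 / Real.sin (π / (2 * n)) < 2 * (1 / Real.sin (π * ((1:ℕ):ℝ) / n)) := by
      rw [hdouble, show (2:ℝ) * (1 / (2 * Real.sin (π / (2 * n)) * Real.cos (π / (2 * n))))
          = 1 / (Real.sin (π / (2 * n)) * Real.cos (π / (2 * n))) from by field_simp,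
        div_lt_div_iff₀ hs2 (by positivity)]
      nlinarith [hs2, hc2']
    have ha1 : π * (2 * ((1:ℕ):ℝ) - 1) / (2 * n) = π / (2 * n) := by push_cast; ring
    have han : π * (2 * (n:ℝ) - 1) / (2 * n) = π - π / (2 * n) := by field_simp
    have hgn1 : π * ((n-1 : ℕ):ℝ) / n = π - π * ((1:ℕ):ℝ) / n := by
      rw [Nat.cast_sub (by omega)]
      push_cast
      field_simp
    -- s₁ and s_{n-1} are both in S
    have hpair : 1 / Real.sin (π * ((1:ℕ):ℝ) / n) + 1 / Real.sin (π * ((n-1:ℕ):ℝ) / n) ≤ S := by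
      have hsub : ({1, n-1} : Finset ℕ) ⊆ Icc 1 (n-1) := by
        intro x hx
        simp only [Finset.mem_insert, Finset.mem_singleton] at hx
        rw [Finset.mem_Icc]; omega
      have := Finset.sum_le_sum_of_subset_of_nonneg hsub
        (fun i hi _ => (hgpos i hi).le)
      rwa [Finset.sum_pair (by omega)] at this
    have hgn1' : 1 / Real.sin (π * ((n-1:ℕ):ℝ) / n) = 1 / Real.sin (π * ((1:ℕ):ℝ) / n) := by
      rw [hgn1, Real.sin_pi_sub]
    -- put it together
    rw [hA, ha1, han, Real.sin_pi_sub]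
    have hg1pos : 0 < 1 / Real.sin (π * ((1:ℕ):ℝ) / n) := hgpos 1 (by rw [Finset.mem_Icc]; omega)
    rw [hgn1'] at hpair
    linarith
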